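/- Let K be the free abelian group on generators {t_m : m ∈ ℤ} ∪ {h_m : m ∈ ℤ} and O the free abelian group on {x_m : m ∈ ℤ} ∪ {y_m : m ∈ ℤ}. Let φ : K → O be given on generators by φ(h_m) = x_m - x_{m-2} and φ(t_m) = x_{m-1} + x_{m-2} + y_m. Then φ is injective. -/
import Mathlib

/-- The free abelian group `K` on `{t_m}_{m∈ℤ} ∪ {h_m}_{m∈ℤ}`. -/
abbrev K : Type := (ℤ ⊕ ℤ) →₀ ℤ

/-- The free abelian group `O` on `{x_m}_{m∈ℤ} ∪ {y_m}_{m∈ℤ}`. -/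
abbrev O : Type := (ℤ ⊕ ℤ) →₀ ℤ

/-- The generator `t_m` of `K`. -/
noncomputable def t (m : ℤ) : K := Finsupp.single (Sum.inl m) 1

/-- The generator `h_m` of `K`. -/
noncomputable def h (m : ℤ) : K := Finsupp.single (Sum.inr m) 1

/-- The generator `x_m` of `O`. -/
noncomputable def x (m : ℤ) : O := Finsupp.single (Sum.inl m) 1

/-- The generator `y_m` of `O`. -/
noncomputable def y (m : ℤ) : O := Finsupp.single (Sum.inr m) 1

theorem phi_injective (φ : K →+ O)
    (hφh : ∀ m : ℤ, φ (h m) = x m - x (m - 2))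
    (hφt : ∀ m : ℤ, φ (t m) = x (m - 1) + x (m - 2) + y m) :
    Function.Injective φ := by
  have hsingle : ∀ (s : ℤ ⊕ ℤ) (n : ℤ), Finsupp.single s n = n • Finsupp.single s (1:ℤ) := by
    intro s n; rw [Finsupp.smul_single, smul_eq_mul, mul_one]
  have key : ∀ (k : K), φ k = k.sum fun s n => n • φ (Finsupp.single s 1) := by
    intro k
    conv_lhs => rw [← Finsupp.sum_single k]
    rw [map_finsuppSum]
    exact Finsupp.sum_congr fun s _ => by rw [hsingle s, map_zsmul]
  rw [injective_iff_map_eq_zero]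
  intro k hk
  -- t-coefficients vanish
  have hA : ∀ m : ℤ, k (Sum.inl m) = 0 := by
    intro m
    have : (φ k) (Sum.inr m) = k (Sum.inl m) := by
      rw [key, Finsupp.sum_apply]
      have : (k.sum fun s n => (n • φ (Finsupp.single s 1)) (Sum.inr m))
          = k.sum fun s n => (Finsupp.single s n) (Sum.inl m) := by
        apply Finsupp.sum_congr
        intro s _
        rcases s with a | b
        · show (_ • φ (t a)) _ = _
          rw [hφt a]
          simp [x, y, Finsupp.single_apply, Sum.inl.injEq]
        · show (_ • φ (h b)) _ = _
          rw [hφh b]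
          simp [x, Finsupp.single_apply]
      rw [this, ← Finsupp.sum_apply, Finsupp.sum_single]
    rw [hk] at this
    simpa using this.symm
  -- h-coefficient recurrence
  have hB : ∀ p : ℤ, k (Sum.inr p) = k (Sum.inr (p + 2)) := by
    intro p
    have : (φ k) (Sum.inl p) = k (Sum.inr p) - k (Sum.inr (p + 2)) := by
      rw [key, Finsupp.sum_apply]
      have : (k.sum fun s n => (n • φ (Finsupp.single s 1)) (Sum.inl p))
          = k.sum fun s n =>
              ((Finsupp.single s n) (Sum.inr p) - (Finsupp.single s n) (Sum.inr (p + 2))) := by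
        apply Finsupp.sum_congr
        intro s hs
        rcases s with a | b
        · show (_ • φ (t a)) _ = _
          rw [hφt a]
          have h0 := hA a
          simp only [Finsupp.mem_support_iff] at hs
          simp [x, y, Finsupp.single_apply, Finsupp.smul_apply, Finsupp.add_apply, h0]
        · show (_ • φ (h b)) _ = _
          rw [hφh b]
          have : b - 2 = p ↔ b = p + 2 := by omega
          simp only [Finsupp.smul_apply, Finsupp.sub_apply, x, Finsupp.single_apply,
            smul_eq_mul, Sum.inl.injEq, Sum.inr.injEq, this]
          split_ifs <;> ring
      rw [this, Finsupp.sum_sub, ← Finsupp.sum_apply, ← Finsupp.sum_apply,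
        Finsupp.sum_single]
    rw [hk] at this
    simp only [Finsupp.coe_zero, Pi.zero_apply] at this
    linarith [this]
  have hB' : ∀ p : ℤ, ∀ n : ℕ, k (Sum.inr p) = k (Sum.inr (p + 2 * n)) := by
    intro p n
    induction n with
    | zero => simp
    | succ n ih =>
      rw [ih, hB]
      ring_nf
      congr 2
      push_cast
      ring
  have hAB : ∀ p : ℤ, k (Sum.inr p) = 0 := by
    intro p
    have hinj : Function.Injective (fun n : ℕ => (Sum.inr (p + 2 * n) : ℤ ⊕ ℤ)) := by
      intro a b hab
      simp only [Sum.inr.injEq] at hab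
      omega
    obtain ⟨s, ⟨n, rfl⟩, hns⟩ :=
      (Set.infinite_range_of_injective hinj).exists_notMem_finset k.support
    rw [hB' p n]
    exact Finsupp.notMem_support_iff.mp hns
  ext s
  rcases s with a | b
  · exact hA a
  · exact hAB b
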